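/- Let H be a Hilbert space, U : ℝ → B(H) a strongly continuous one-parameter unitary group, C a non-negative bounded self-adjoint operator on H, and suppose (1/T)∫₀^T ‖√C U(t/ε) v‖² dt ≤ ω(ε)‖v‖² for all v ∈ H. Then for every X ∈ L²(0,T;H), (1/T²)∫₀^T ‖√C ∫₀^t U((t−s)/ε) X(s) ds‖² dt ≤ ω(ε) ∫₀^T ‖X(s)‖² ds. -/

import Mathlib

open MeasureTheory Filter

private lemma jointCont {H : Type*} [NormedAddCommGroup H] [InnerProductSpace ℂ H]
    (U : ℝ → H →L[ℂ] H) (hiso : ∀ (t : ℝ) (x : H), ‖U t x‖ = ‖x‖)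
    (hcont : ∀ x : H, Continuous fun t => U t x) :
    Continuous fun p : ℝ × H => U p.1 p.2 := by
  rw [continuous_iff_continuousAt]
  rintro ⟨r₀, x₀⟩
  rw [ContinuousAt, tendsto_iff_norm_sub_tendsto_zero]
  have h1 : Continuous fun p : ℝ × H => ‖p.2 - x₀‖ + ‖U p.1 x₀ - U r₀ x₀‖ :=
    ((continuous_snd.sub continuous_const).norm).add
      ((((hcont x₀).comp continuous_fst).sub continuous_const).norm)
  have hb : Tendsto (fun p : ℝ × H => ‖p.2 - x₀‖ + ‖U p.1 x₀ - U r₀ x₀‖)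
      (nhds (r₀, x₀)) (nhds 0) := by
    have := h1.tendsto (r₀, x₀)
    simpa using this
  refine squeeze_zero (fun p => norm_nonneg _) (fun p => ?_) hb
  have h2 : U p.1 p.2 - U r₀ x₀ = U p.1 (p.2 - x₀) + (U p.1 x₀ - U r₀ x₀) := by
    rw [map_sub]; abel
  rw [h2]
  calc ‖U p.1 (p.2 - x₀) + (U p.1 x₀ - U r₀ x₀)‖
      ≤ ‖U p.1 (p.2 - x₀)‖ + ‖U p.1 x₀ - U r₀ x₀‖ := norm_add_le _ _
    _ = ‖p.2 - x₀‖ + ‖U p.1 x₀ - U r₀ x₀‖ := by rw [hiso]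

private lemma sq_integral_le_aux {α : Type*} {m : MeasurableSpace α} {ν : Measure α}
    [IsFiniteMeasure ν] {f : α → ℝ} (hf : ∀ a, 0 ≤ f a) (hmem : MemLp f 2 ν) :
    (∫ a, f a ∂ν) ^ 2 ≤ (ν Set.univ).toReal * ∫ a, f a ^ 2 ∂ν := by
  have hpq : Real.HolderConjugate 2 2 := by constructor <;> norm_num
  have hmem' : MemLp f (ENNReal.ofReal 2) ν := by
    convert hmem using 2
    norm_num
  have hone : MemLp (fun _ : α => (1 : ℝ)) (ENNReal.ofReal 2) ν := memLp_const _
  have h := integral_mul_le_Lp_mul_Lq_of_nonneg hpq (Eventually.of_forall hf)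
    (Eventually.of_forall fun _ => zero_le_one) hmem' hone
  simp only [mul_one] at h
  have hr : ∀ x : ℝ, x ^ (2 : ℝ) = x ^ 2 := fun x => by
    rw [show (2:ℝ) = ((2:ℕ):ℝ) by norm_num, Real.rpow_natCast]
  have h2 : ∫ a, f a ^ (2:ℝ) ∂ν = ∫ a, f a ^ 2 ∂ν :=
    integral_congr_ae (Eventually.of_forall fun a => hr _)
  have h3 : ∫ a, (1:ℝ) ^ (2:ℝ) ∂ν = (ν Set.univ).toReal := by
    simp [Real.one_rpow, integral_const, Measure.real]
  rw [h2, h3] at h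
  have hI2 : 0 ≤ ∫ a, f a ^ 2 ∂ν := integral_nonneg fun a => sq_nonneg _
  have hμ0 : 0 ≤ (ν Set.univ).toReal := ENNReal.toReal_nonneg
  have hsq : ((∫ a, f a ^ 2 ∂ν) ^ (1/2 : ℝ) * (ν Set.univ).toReal ^ (1/2 : ℝ)) ^ 2
      = (ν Set.univ).toReal * ∫ a, f a ^ 2 ∂ν := by
    rw [mul_pow, ← Real.rpow_natCast ((∫ a, f a ^ 2 ∂ν) ^ (1/2:ℝ)) 2,
      ← Real.rpow_natCast ((ν Set.univ).toReal ^ (1/2:ℝ)) 2,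
      ← Real.rpow_mul hI2, ← Real.rpow_mul hμ0]
    norm_num
    ring
  calc (∫ a, f a ∂ν) ^ 2
      ≤ ((∫ a, f a ^ 2 ∂ν) ^ (1/2 : ℝ) * (ν Set.univ).toReal ^ (1/2 : ℝ)) ^ 2 := by
        apply pow_le_pow_left₀ (integral_nonneg hf) h
    _ = (ν Set.univ).toReal * ∫ a, f a ^ 2 ∂ν := hsq

/-- Duhamel-type RAGE estimate: if `U` is a strongly continuous unitary group on a Hilbert
space `H`, `C` a non-negative bounded self-adjoint operator with square root `√C`, and
`(1/T)∫₀ᵀ ‖√C U(t/ε) v‖² dt ≤ ω(ε)‖v‖²` for all `v`, then for every `X ∈ L²(0,T;H)`,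
`(1/T²)∫₀ᵀ ‖√C ∫₀ᵗ U((t−s)/ε) X(s) ds‖² dt ≤ ω(ε)∫₀ᵀ ‖X(s)‖² ds`. -/
theorem stmt7 {H : Type*} [NormedAddCommGroup H] [InnerProductSpace ℂ H] [CompleteSpace H]
    (U : ℝ → H →L[ℂ] H)
    (hgroup : ∀ s t : ℝ, U (s + t) = (U s).comp (U t))
    (hU0 : U 0 = ContinuousLinearMap.id ℂ H)
    (hiso : ∀ (t : ℝ) (x : H), ‖U t x‖ = ‖x‖)
    (hcont : ∀ x : H, Continuous fun t => U t x)
    (C sqrtC : H →L[ℂ] H) (hC : IsSelfAdjoint C)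
    (hCpos : ∀ x : H, 0 ≤ (inner ℂ (C x) x : ℂ).re)
    (hsq : sqrtC.comp sqrtC = C) (hsqsa : IsSelfAdjoint sqrtC)
    (hsqpos : ∀ x : H, 0 ≤ (inner ℂ (sqrtC x) x : ℂ).re)
    (T ε : ℝ) (hT : 0 < T) (hε : 0 < ε) (ω : ℝ → ℝ)
    (hbound : ∀ v : H, (1/T) * ∫ t in (0:ℝ)..T, ‖sqrtC (U (t/ε) v)‖ ^ 2 ≤ ω ε * ‖v‖ ^ 2)
    (X : ℝ → H)
    (hX : MemLp X 2 (volume.restrict (Set.Ioc 0 T))) :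
    (1/T^2) * ∫ t in (0:ℝ)..T, ‖sqrtC (∫ s in (0:ℝ)..t, U ((t - s)/ε) (X s))‖ ^ 2
      ≤ ω ε * ∫ s in (0:ℝ)..T, ‖X s‖ ^ 2 := by
  set μ := volume.restrict (Set.Ioc (0:ℝ) T) with hμdef
  haveI hfinμ : IsFiniteMeasure μ := by
    constructor
    rw [hμdef, Measure.restrict_apply_univ, Real.volume_Ioc]
    exact ENNReal.ofReal_lt_top
  set M := ‖sqrtC‖ with hMdef
  have hF : Continuous fun p : ℝ × H => U p.1 p.2 := jointCont U hiso hcont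
  have hXm : AEStronglyMeasurable X μ := hX.1
  have hX1 : Integrable X μ := hX.integrable (by norm_num)
  have hX2 : Integrable (fun s => ‖X s‖ ^ 2) μ := by
    have h := hX.integrable_norm_rpow (by norm_num) (by norm_num)
    refine h.congr (Eventually.of_forall fun s => ?_)
    show ‖X s‖ ^ ((2:ENNReal).toReal) = ‖X s‖ ^ 2
    rw [ENNReal.toReal_ofNat, show (2:ℝ) = ((2:ℕ):ℝ) by norm_num, Real.rpow_natCast]
  have hgb : ∀ t s : ℝ, ‖sqrtC (U ((t - s)/ε) (X s))‖ ≤ M * ‖X s‖ := fun t s => by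
    calc ‖sqrtC (U ((t - s)/ε) (X s))‖ ≤ M * ‖U ((t - s)/ε) (X s)‖ := sqrtC.le_opNorm _
      _ = M * ‖X s‖ := by rw [hiso]
  have hmeas : ∀ t : ℝ, AEStronglyMeasurable (fun s => U ((t - s)/ε) (X s)) μ := fun t =>
    hF.comp_aestronglyMeasurable
      ((((continuous_const.sub continuous_id).div_const ε).aestronglyMeasurable).prodMk hXm)
  have hsqm : ∀ t : ℝ, AEStronglyMeasurable (fun s => ‖sqrtC (U ((t - s)/ε) (X s))‖ ^ 2) μ :=
    fun t => ((sqrtC.continuous.comp_aestronglyMeasurable (hmeas t)).norm).pow 2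
  have hsqint : ∀ t : ℝ, Integrable (fun s => ‖sqrtC (U ((t - s)/ε) (X s))‖ ^ 2) μ := fun t => by
    refine (hX2.const_mul (M ^ 2)).mono' (hsqm t) (Eventually.of_forall fun s => ?_)
    rw [Real.norm_of_nonneg (by positivity)]
    calc ‖sqrtC (U ((t - s)/ε) (X s))‖ ^ 2 ≤ (M * ‖X s‖) ^ 2 :=
          pow_le_pow_left₀ (norm_nonneg _) (hgb t s) 2
      _ = M ^ 2 * ‖X s‖ ^ 2 := mul_pow _ _ _
  -- joint measurability and integrability of the squared norm on the product
  have hprodm : AEStronglyMeasurable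
      (fun p : ℝ × ℝ => ‖sqrtC (U ((p.1 - p.2)/ε) (X p.2))‖ ^ 2) (μ.prod μ) := by
    have h1 : AEStronglyMeasurable (fun p : ℝ × ℝ => X p.2) (μ.prod μ) := hXm.comp_snd
    have h2 : AEStronglyMeasurable (fun p : ℝ × ℝ => U ((p.1 - p.2)/ε) (X p.2)) (μ.prod μ) :=
      hF.comp_aestronglyMeasurable
        ((((continuous_fst.sub continuous_snd).div_const ε).aestronglyMeasurable).prodMk h1)
    exact ((sqrtC.continuous.comp_aestronglyMeasurable h2).norm).pow 2
  have hprod : Integrable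
      (fun p : ℝ × ℝ => ‖sqrtC (U ((p.1 - p.2)/ε) (X p.2))‖ ^ 2) (μ.prod μ) := by
    have hb : Integrable (fun p : ℝ × ℝ => (M ^ 2 : ℝ) * ‖X p.2‖ ^ 2) (μ.prod μ) := by
      simpa using (integrable_const (M ^ 2 : ℝ)).mul_prod hX2
    refine hb.mono' hprodm (Eventually.of_forall fun p => ?_)
    rw [Real.norm_of_nonneg (by positivity)]
    calc ‖sqrtC (U ((p.1 - p.2)/ε) (X p.2))‖ ^ 2 ≤ (M * ‖X p.2‖) ^ 2 :=
          pow_le_pow_left₀ (norm_nonneg _) (hgb p.1 p.2) 2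
      _ = M ^ 2 * ‖X p.2‖ ^ 2 := mul_pow _ _ _
  -- key per-t estimate
  have key : ∀ t ∈ Set.Ioc (0:ℝ) T,
      ‖sqrtC (∫ s in (0:ℝ)..t, U ((t - s)/ε) (X s))‖ ^ 2
        ≤ T * ∫ s, ‖sqrtC (U ((t - s)/ε) (X s))‖ ^ 2 ∂μ := by
    intro t ht
    set ν := volume.restrict (Set.Ioc (0:ℝ) t) with hνdef
    haveI : IsFiniteMeasure ν := by
      constructor
      rw [hνdef, Measure.restrict_apply_univ, Real.volume_Ioc]
      exact ENNReal.ofReal_lt_top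
    have hle : ν ≤ μ := Measure.restrict_mono (Set.Ioc_subset_Ioc_right ht.2) le_rfl
    have hmeasν : AEStronglyMeasurable (fun s => U ((t - s)/ε) (X s)) ν :=
      (hmeas t).mono_measure hle
    have hint : Integrable (fun s => U ((t - s)/ε) (X s)) ν := by
      refine ((hX1.norm).mono_measure hle).mono' hmeasν (Eventually.of_forall fun s => ?_)
      rw [hiso]
    have e1 : ‖sqrtC (∫ s in (0:ℝ)..t, U ((t - s)/ε) (X s))‖
        ≤ ∫ s, ‖sqrtC (U ((t - s)/ε) (X s))‖ ∂ν := by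
      rw [intervalIntegral.integral_of_le ht.1.le,
        ← ContinuousLinearMap.integral_comp_comm sqrtC hint]
      exact norm_integral_le_integral_norm _
    have hmem2 : MemLp (fun s => ‖sqrtC (U ((t - s)/ε) (X s))‖) 2 ν := by
      have hXν : MemLp X 2 ν := hX.mono_measure hle
      refine MemLp.of_le ((hXν.norm).const_mul M)
        ((sqrtC.continuous.comp_aestronglyMeasurable hmeasν).norm)
        (Eventually.of_forall fun s => ?_)
      rw [norm_norm, Real.norm_of_nonneg (by positivity)]
      exact hgb t s
    have e2 := sq_integral_le_aux (fun s => norm_nonneg _) hmem2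
    have hν : (ν Set.univ).toReal = t := by
      rw [hνdef, Measure.restrict_apply_univ, Real.volume_Ioc,
        ENNReal.toReal_ofReal (by linarith [ht.1])]
      ring
    have e3 : ∫ s, ‖sqrtC (U ((t - s)/ε) (X s))‖ ^ 2 ∂ν
        ≤ ∫ s, ‖sqrtC (U ((t - s)/ε) (X s))‖ ^ 2 ∂μ :=
      setIntegral_mono_set (hsqint t) (Eventually.of_forall fun s => by positivity)
        (HasSubset.Subset.eventuallyLE (Set.Ioc_subset_Ioc_right ht.2))
    calc ‖sqrtC (∫ s in (0:ℝ)..t, U ((t - s)/ε) (X s))‖ ^ 2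
        ≤ (∫ s, ‖sqrtC (U ((t - s)/ε) (X s))‖ ∂ν) ^ 2 :=
          pow_le_pow_left₀ (norm_nonneg _) e1 2
      _ ≤ t * ∫ s, ‖sqrtC (U ((t - s)/ε) (X s))‖ ^ 2 ∂ν := by rw [hν] at e2; exact e2
      _ ≤ T * ∫ s, ‖sqrtC (U ((t - s)/ε) (X s))‖ ^ 2 ∂μ :=
          mul_le_mul ht.2 e3 (integral_nonneg fun s => by positivity) hT.le
  -- per-s bound using the group property and the hypothesis
  have inner_bound : ∀ s : ℝ, ∫ t, ‖sqrtC (U ((t - s)/ε) (X s))‖ ^ 2 ∂μ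
      ≤ T * (ω ε * ‖X s‖ ^ 2) := by
    intro s
    have hshift : ∀ t : ℝ, U ((t - s)/ε) (X s) = U (t/ε) (U (-s/ε) (X s)) := by
      intro t
      have h : (t - s)/ε = t/ε + (-s/ε) := by ring
      rw [h, hgroup]; rfl
    have hb := hbound (U (-s/ε) (X s))
    rw [intervalIntegral.integral_of_le hT.le, hiso] at hb
    have heq : ∫ t, ‖sqrtC (U ((t - s)/ε) (X s))‖ ^ 2 ∂μ
        = ∫ t, ‖sqrtC (U (t/ε) (U (-s/ε) (X s)))‖ ^ 2 ∂μ :=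
      integral_congr_ae (Eventually.of_forall fun t => by simp only [hshift])
    rw [heq]
    have h3 := mul_le_mul_of_nonneg_left hb hT.le
    calc ∫ t, ‖sqrtC (U (t/ε) (U (-s/ε) (X s)))‖ ^ 2 ∂μ
        = T * (1/T * ∫ t, ‖sqrtC (U (t/ε) (U (-s/ε) (X s)))‖ ^ 2 ∂μ) := by
          field_simp
      _ ≤ T * (ω ε * ‖X s‖ ^ 2) := h3
  -- assemble
  have big : ∫ t, ‖sqrtC (∫ s in (0:ℝ)..t, U ((t - s)/ε) (X s))‖ ^ 2 ∂μ
      ≤ T ^ 2 * (ω ε * ∫ s, ‖X s‖ ^ 2 ∂μ) := by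
    have h1 : ∫ t, ‖sqrtC (∫ s in (0:ℝ)..t, U ((t - s)/ε) (X s))‖ ^ 2 ∂μ
        ≤ ∫ t, (T * ∫ s, ‖sqrtC (U ((t - s)/ε) (X s))‖ ^ 2 ∂μ) ∂μ := by
      refine integral_mono_of_nonneg (Eventually.of_forall fun t => by positivity)
        (hprod.integral_prod_left.const_mul T) ?_
      filter_upwards [ae_restrict_mem measurableSet_Ioc] with t ht using key t ht
    have h2 : ∫ t, (T * ∫ s, ‖sqrtC (U ((t - s)/ε) (X s))‖ ^ 2 ∂μ) ∂μ
        = T * ∫ s, ∫ t, ‖sqrtC (U ((t - s)/ε) (X s))‖ ^ 2 ∂μ ∂μ := by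
      rw [integral_const_mul, integral_integral_swap hprod]
    have h3 : ∫ s, ∫ t, ‖sqrtC (U ((t - s)/ε) (X s))‖ ^ 2 ∂μ ∂μ
        ≤ ∫ s, T * (ω ε * ‖X s‖ ^ 2) ∂μ :=
      integral_mono_of_nonneg
        (Eventually.of_forall fun s => integral_nonneg fun t => by positivity)
        ((hX2.const_mul (ω ε)).const_mul T) (Eventually.of_forall inner_bound)
    have h4 : ∫ s, T * (ω ε * ‖X s‖ ^ 2) ∂μ = T * (ω ε * ∫ s, ‖X s‖ ^ 2 ∂μ) := by
      rw [integral_const_mul, integral_const_mul]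
    calc ∫ t, ‖sqrtC (∫ s in (0:ℝ)..t, U ((t - s)/ε) (X s))‖ ^ 2 ∂μ
        ≤ ∫ t, (T * ∫ s, ‖sqrtC (U ((t - s)/ε) (X s))‖ ^ 2 ∂μ) ∂μ := h1
      _ = T * ∫ s, ∫ t, ‖sqrtC (U ((t - s)/ε) (X s))‖ ^ 2 ∂μ ∂μ := h2
      _ ≤ T * ∫ s, T * (ω ε * ‖X s‖ ^ 2) ∂μ := mul_le_mul_of_nonneg_left h3 hT.le
      _ = T ^ 2 * (ω ε * ∫ s, ‖X s‖ ^ 2 ∂μ) := by rw [h4]; ring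
  rw [intervalIntegral.integral_of_le hT.le, intervalIntegral.integral_of_le hT.le]
  have hT0 : T ≠ 0 := ne_of_gt hT
  calc (1/T^2) * ∫ t, ‖sqrtC (∫ s in (0:ℝ)..t, U ((t - s)/ε) (X s))‖ ^ 2 ∂μ
      ≤ (1/T^2) * (T ^ 2 * (ω ε * ∫ s, ‖X s‖ ^ 2 ∂μ)) :=
        mul_le_mul_of_nonneg_left big (by positivity)
    _ = ω ε * ∫ s, ‖X s‖ ^ 2 ∂μ := by field_simp
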